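/- Let n be a squarefree positive odd integer and let c, d, i be integers. Then Σ_{j=0}^{n-1} (j/n)·((i²+cij+dj²)/n) = Σ_{j=0}^{n-1} (−j/n)·((i²+2cij+(c²−4d)j²)/n), where (·/n) is the Jacobi symbol. -/

import Mathlib

open Finset

variable {F : Type*} [Field F] [Fintype F] [DecidableEq F]

private lemma aux_shift (a : F) (f : F → ℤ) :
    ∑ j : F, f (j + a) = ∑ j : F, f j :=
  Fintype.sum_equiv (Equiv.addRight a) _ _ (fun _ => rfl)

private lemma aux_sum_shift (hF : ringChar F ≠ 2) (a : F) :
    ∑ j : F, quadraticChar F (j + a) = 0 := by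
  rw [aux_shift a (fun x => quadraticChar F x)]
  exact quadraticChar_sum_zero hF

private lemma card_fiber (hF : ringChar F ≠ 2) {b : F} (hb : b ≠ 0) (t : F) :
    ((univ.filter fun j : F => j ≠ 0 ∧ j + b * j⁻¹ = t).card : ℤ)
      = quadraticChar F (t ^ 2 - 4 * b) + 1 := by
  have h2 : (2 : F) ≠ 0 := Ring.two_ne_zero hF
  rw [← quadraticChar_card_sqrts hF (t ^ 2 - 4 * b)]
  congr 1
  have hset : {x : F | x ^ 2 = t ^ 2 - 4 * b}.toFinset
      = univ.filter fun x : F => x ^ 2 = t ^ 2 - 4 * b := by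
    ext x; simp
  rw [hset]
  apply Finset.card_nbij' (fun j => 2 * j - t) (fun x => (x + t) / 2)
  · intro j hj
    simp only [Finset.mem_coe, mem_filter, mem_univ, true_and] at hj ⊢
    obtain ⟨hj0, hjt⟩ := hj
    have h1 : j * j + b = t * j := by
      field_simp at hjt
      linear_combination hjt
    linear_combination (4 : F) * h1
  · intro x hx
    simp only [Finset.mem_coe, mem_filter, mem_univ, true_and] at hx ⊢
    have hxt0 : x + t ≠ 0 := by
      intro h0
      apply hb
      have hxe : x = -t := by linear_combination h0
      rw [hxe] at hx
      have h4 : (4 : F) * b = 0 := by linear_combination hx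
      rcases mul_eq_zero.mp h4 with h | h
      · exact absurd h (by
          have : (4 : F) = 2 * 2 := by norm_num
          rw [this]; exact mul_ne_zero h2 h2)
      · exact h
    have hj0 : (x + t) / 2 ≠ 0 := div_ne_zero hxt0 h2
    refine ⟨hj0, ?_⟩
    field_simp
    linear_combination hx
  · intro a _
    field_simp
    ring
  · intro a _
    field_simp
    ring

private lemma coreP (hF : ringChar F ≠ 2) (a b : F) :
    ∑ j : F, quadraticChar F (j * (j ^ 2 + a * j + b))
      = ∑ j : F, quadraticChar F (j * (j ^ 2 - 2 * a * j + (a ^ 2 - 4 * b))) := by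
  by_cases hb : b = 0
  · subst hb
    have hL : ∑ j : F, quadraticChar F (j * (j ^ 2 + a * j + 0)) = -quadraticChar F a := by
      have h1 : ∀ j : F, quadraticChar F (j * (j ^ 2 + a * j + 0))
          = quadraticChar F (j + a) - (1 - quadraticChar F j ^ 2) * quadraticChar F (j + a) := by
        intro j
        have he : j * (j ^ 2 + a * j + 0) = (j * j) * (j + a) := by ring
        rw [he, map_mul, map_mul]
        ring
      rw [Finset.sum_congr rfl fun j _ => h1 j, Finset.sum_sub_distrib]
      have h2 : ∑ j : F, (1 - quadraticChar F j ^ 2) * quadraticChar F (j + a)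
          = quadraticChar F a := by
        rw [Finset.sum_eq_single 0]
        · simp
        · intro j _ hj
          rw [quadraticChar_sq_one hj]
          ring
        · intro h; exact absurd (mem_univ 0) h
      rw [h2, aux_sum_shift hF a]
      ring
    have hR : ∑ j : F, quadraticChar F (j * (j ^ 2 - 2 * a * j + (a ^ 2 - 4 * 0)))
        = -quadraticChar F a := by
      have h1 : ∀ j : F, quadraticChar F (j * (j ^ 2 - 2 * a * j + (a ^ 2 - 4 * 0)))
          = quadraticChar F j - (1 - quadraticChar F (j - a) ^ 2) * quadraticChar F j := by
        intro j
        have he : j * (j ^ 2 - 2 * a * j + (a ^ 2 - 4 * 0)) = ((j - a) * (j - a)) * j := by ring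
        rw [he, map_mul, map_mul]
        ring
      rw [Finset.sum_congr rfl fun j _ => h1 j, Finset.sum_sub_distrib]
      have h2 : ∑ j : F, (1 - quadraticChar F (j - a) ^ 2) * quadraticChar F j
          = quadraticChar F a := by
        rw [Finset.sum_eq_single a]
        · simp
        · intro j _ hj
          rw [quadraticChar_sq_one (sub_ne_zero.mpr hj)]
          ring
        · intro h; exact absurd (mem_univ a) h
      rw [h2, quadraticChar_sum_zero hF]
      ring
    rw [hL, hR]
  · -- b ≠ 0
    have hstep : ∑ j : F, quadraticChar F (j * (j ^ 2 + a * j + b))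
        = ∑ j ∈ univ.filter (fun j : F => j ≠ 0), quadraticChar F ((j + b * j⁻¹) + a) := by
      rw [← Finset.sum_filter_of_ne (p := fun j : F => j ≠ 0)
        (f := fun j => quadraticChar F (j * (j ^ 2 + a * j + b)))]
      · apply Finset.sum_congr rfl
        intro j hj
        simp only [mem_filter, mem_univ, true_and] at hj
        have he : j * (j ^ 2 + a * j + b) = (j * j) * ((j + b * j⁻¹) + a) := by
          field_simp; ring
        rw [he, map_mul, map_mul]
        have : quadraticChar F j * quadraticChar F j = 1 := by
          have := quadraticChar_sq_one (F := F) hj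
          rwa [pow_two] at this
        rw [this, one_mul]
      · intro j _ hj0
        intro h0
        rw [h0] at hj0
        simp at hj0
    rw [hstep]
    rw [← Finset.sum_fiberwise_of_maps_to' (g := fun j : F => j + b * j⁻¹) (t := univ)
        (fun j _ => mem_univ _) (fun t => quadraticChar F (t + a))]
    have hinner : ∀ t : F, (∑ j ∈ (univ.filter (fun j : F => j ≠ 0)).filter
          (fun j => j + b * j⁻¹ = t), quadraticChar F (t + a))
        = (quadraticChar F (t ^ 2 - 4 * b) + 1) * quadraticChar F (t + a) := by
      intro t
      rw [Finset.sum_const, Finset.filter_filter, nsmul_eq_mul]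
      rw [card_fiber hF hb t]
    rw [Finset.sum_congr rfl fun t _ => hinner t]
    have hexp : ∀ t : F, (quadraticChar F (t ^ 2 - 4 * b) + 1) * quadraticChar F (t + a)
        = quadraticChar F ((t ^ 2 - 4 * b) * (t + a)) + quadraticChar F (t + a) := by
      intro t; rw [map_mul]; ring
    rw [Finset.sum_congr rfl fun t _ => hexp t, Finset.sum_add_distrib, aux_sum_shift hF a,
      add_zero]
    apply Fintype.sum_equiv (Equiv.addRight a)
    intro t
    simp only [Equiv.coe_addRight]
    congr 1
    ring

private lemma rev_sum (u v : F) :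
    ∑ j : F, quadraticChar F (j * (v * j ^ 2 + u * j + 1))
      = ∑ j : F, quadraticChar F (j * (j ^ 2 + u * j + v)) := by
  have hrev : ∀ j : F, quadraticChar F (j * (v * j ^ 2 + u * j + 1))
      = quadraticChar F (j⁻¹ * ((j⁻¹) ^ 2 + u * j⁻¹ + v)) := by
    intro j
    by_cases hj : j = 0
    · subst hj; simp
    · have he : j⁻¹ * ((j⁻¹) ^ 2 + u * j⁻¹ + v)
          = (j * (v * j ^ 2 + u * j + 1)) * (j⁻¹ * j⁻¹) ^ 2 := by
        field_simp
        ring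
      conv_rhs => rw [he, map_mul,
        quadraticChar_sq_one' (mul_ne_zero (inv_ne_zero hj) (inv_ne_zero hj)), mul_one]
  rw [Finset.sum_congr rfl fun j _ => hrev j]
  exact Equiv.sum_comp (Function.Involutive.toPerm _ (fun x : F => inv_inv x))
    (fun u_1 => quadraticChar F (u_1 * (u_1 ^ 2 + u * u_1 + v)))

private lemma key_field (hF : ringChar F ≠ 2) (c d i : F) :
    ∑ j : F, quadraticChar F j * quadraticChar F (i ^ 2 + c * i * j + d * j ^ 2)
      = ∑ j : F, quadraticChar F (-j)
          * quadraticChar F (i ^ 2 + 2 * c * i * j + (c ^ 2 - 4 * d) * j ^ 2) := by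
  simp only [← map_mul (quadraticChar F)]
  have hcube : ∀ w j : F, quadraticChar F (w * j ^ 3) = quadraticChar F (w * j) := by
    intro w j
    by_cases hj : j = 0
    · subst hj; norm_num
    · have he : w * j ^ 3 = (w * j) * j ^ 2 := by ring
      rw [he, map_mul, quadraticChar_sq_one' hj, mul_one]
  have hlin : ∀ w : F, ∑ j : F, quadraticChar F (w * j) = 0 := by
    intro w
    simp only [map_mul]
    rw [← Finset.mul_sum, quadraticChar_sum_zero hF, mul_zero]
  by_cases hi : i = 0
  · subst hi
    have hL : ∀ j : F, j * ((0:F) ^ 2 + c * 0 * j + d * j ^ 2) = d * j ^ 3 := by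
      intro j; ring
    have hR : ∀ j : F, -j * ((0:F) ^ 2 + 2 * c * 0 * j + (c ^ 2 - 4 * d) * j ^ 2)
        = (-(c ^ 2 - 4 * d)) * j ^ 3 := by
      intro j; ring
    have e1 : ∑ j : F, quadraticChar F (j * ((0:F) ^ 2 + c * 0 * j + d * j ^ 2))
        = ∑ j : F, quadraticChar F (d * j) :=
      Finset.sum_congr rfl fun j _ => by rw [hL j, hcube]
    have e2 : ∑ j : F, quadraticChar F (-j * ((0:F) ^ 2 + 2 * c * 0 * j
          + (c ^ 2 - 4 * d) * j ^ 2))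
        = ∑ j : F, quadraticChar F (-(c ^ 2 - 4 * d) * j) :=
      Finset.sum_congr rfl fun j _ => by rw [hR j, hcube]
    rw [e1, e2, hlin, hlin]
  · -- i ≠ 0
    have hLscale : ∑ j : F, quadraticChar F (j * (i ^ 2 + c * i * j + d * j ^ 2))
        = quadraticChar F i * ∑ j : F, quadraticChar F (j * (d * j ^ 2 + c * j + 1)) := by
      rw [← Equiv.sum_comp (Equiv.mulLeft₀ i hi)
        (fun j => quadraticChar F (j * (i ^ 2 + c * i * j + d * j ^ 2)))]
      rw [Finset.mul_sum]
      apply Finset.sum_congr rfl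
      intro j _
      simp only [Equiv.mulLeft₀_apply]
      have he : i * j * (i ^ 2 + c * i * (i * j) + d * (i * j) ^ 2)
          = (i * (j * (d * j ^ 2 + c * j + 1))) * i ^ 2 := by ring
      conv_lhs => rw [he, map_mul, quadraticChar_sq_one' hi, mul_one, map_mul]
    have hRscale : ∑ j : F, quadraticChar F (-j * (i ^ 2 + 2 * c * i * j
          + (c ^ 2 - 4 * d) * j ^ 2))
        = quadraticChar F i
            * ∑ j : F, quadraticChar F (-j * ((c ^ 2 - 4 * d) * j ^ 2 + 2 * c * j + 1)) := by
      rw [← Equiv.sum_comp (Equiv.mulLeft₀ i hi)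
        (fun j => quadraticChar F (-j * (i ^ 2 + 2 * c * i * j + (c ^ 2 - 4 * d) * j ^ 2)))]
      rw [Finset.mul_sum]
      apply Finset.sum_congr rfl
      intro j _
      simp only [Equiv.mulLeft₀_apply]
      have he : -(i * j) * (i ^ 2 + 2 * c * i * (i * j) + (c ^ 2 - 4 * d) * (i * j) ^ 2)
          = (i * (-j * ((c ^ 2 - 4 * d) * j ^ 2 + 2 * c * j + 1))) * i ^ 2 := by ring
      conv_lhs => rw [he, map_mul, quadraticChar_sq_one' hi, mul_one, map_mul]
    have hRneg : ∑ j : F, quadraticChar F (-j * ((c ^ 2 - 4 * d) * j ^ 2 + 2 * c * j + 1))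
        = ∑ j : F, quadraticChar F (j * ((c ^ 2 - 4 * d) * j ^ 2 + (-(2 * c)) * j + 1)) := by
      rw [← Equiv.sum_comp (Equiv.neg F)
        (fun j => quadraticChar F (-j * ((c ^ 2 - 4 * d) * j ^ 2 + 2 * c * j + 1)))]
      apply Finset.sum_congr rfl
      intro j _
      simp only [Equiv.neg_apply]
      congr 1
      ring
    rw [hLscale, hRscale, hRneg, rev_sum, rev_sum]
    congr 1
    rw [coreP hF c d]
    apply Finset.sum_congr rfl
    intro j _
    congr 1
    ring

private lemma sum_range_zmod {M : Type*} [AddCommMonoid M] (n : ℕ) [NeZero n] (f : ℕ → M) :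
    ∑ j ∈ Finset.range n, f j = ∑ x : ZMod n, f x.val := by
  exact Finset.sum_nbij' (fun j => (j : ZMod n)) (fun x => x.val)
    (fun a _ => mem_univ _) (fun x _ => mem_range.mpr (ZMod.val_lt x))
    (fun a ha => ZMod.val_cast_of_lt (mem_range.mp ha))
    (fun x _ => ZMod.natCast_rightInverse x)
    (fun a ha => by rw [ZMod.val_cast_of_lt (mem_range.mp ha)])

private lemma prime_case (p : ℕ) [hp : Fact p.Prime] (hp2 : p ≠ 2) (c d i : ℤ) :
    ∑ j ∈ Finset.range p, jacobiSym ((j : ℤ) * (i ^ 2 + c * i * j + d * j ^ 2)) p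
      = ∑ j ∈ Finset.range p,
          jacobiSym ((-(j : ℤ)) * (i ^ 2 + 2 * c * i * j + (c ^ 2 - 4 * d) * j ^ 2)) p := by
  have hJ : ∀ a : ℤ, jacobiSym a p = quadraticChar (ZMod p) (a : ZMod p) := fun a =>
    (jacobiSym.legendreSym.to_jacobiSym p a).symm
  have hchar : ringChar (ZMod p) ≠ 2 := by
    rw [ZMod.ringChar_zmod_n]; exact hp2
  rw [sum_range_zmod, sum_range_zmod]
  have hmain := key_field hchar (c : ZMod p) (d : ZMod p) (i : ZMod p)
  simp only [← map_mul (quadraticChar (ZMod p))] at hmain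
  have e1 : ∑ x : ZMod p, jacobiSym ((x.val : ℤ) * (i ^ 2 + c * i * x.val + d * x.val ^ 2)) p
      = ∑ x : ZMod p, quadraticChar (ZMod p)
          (x * ((i : ZMod p) ^ 2 + (c : ZMod p) * (i : ZMod p) * x + (d : ZMod p) * x ^ 2)) := by
    apply Finset.sum_congr rfl
    intro x _
    rw [hJ]
    congr 1
    push_cast [ZMod.natCast_val, ZMod.cast_id]
    ring
  have e2 : ∑ x : ZMod p, jacobiSym ((-(x.val : ℤ))
        * (i ^ 2 + 2 * c * i * x.val + (c ^ 2 - 4 * d) * x.val ^ 2)) p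
      = ∑ x : ZMod p, quadraticChar (ZMod p)
          (-x * ((i : ZMod p) ^ 2 + 2 * (c : ZMod p) * (i : ZMod p) * x
            + ((c : ZMod p) ^ 2 - 4 * (d : ZMod p)) * x ^ 2)) := by
    apply Finset.sum_congr rfl
    intro x _
    rw [hJ]
    congr 1
    push_cast [ZMod.natCast_val, ZMod.cast_id]
    ring
  rw [e1, e2, hmain]

private lemma split_lemma (a b : ℕ) [NeZero a] [NeZero b] (hab : Nat.Coprime a b) (f : ℤ → ℤ)
    (hf : ∀ (m : ℕ) (x y : ℤ), (x : ZMod m) = (y : ZMod m) → ((f x : ZMod m)) = ((f y : ZMod m))) :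
    ∑ j ∈ Finset.range (a * b), jacobiSym (f j) (a * b)
      = (∑ j ∈ Finset.range a, jacobiSym (f j) a)
        * (∑ j ∈ Finset.range b, jacobiSym (f j) b) := by
  haveI : NeZero (a * b) := ⟨mul_ne_zero (NeZero.ne a) (NeZero.ne b)⟩
  rw [sum_range_zmod, sum_range_zmod, sum_range_zmod]
  simp only [jacobiSym.mul_right]
  set e := (ZMod.chineseRemainder hab).toEquiv with he
  rw [← Equiv.sum_comp e.symm
    (fun z : ZMod (a * b) => jacobiSym (f z.val) a * jacobiSym (f z.val) b)]
  rw [Fintype.sum_prod_type]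
  have hterm : ∀ (u : ZMod a) (v : ZMod b),
      jacobiSym (f ((e.symm (u, v)).val : ℤ)) a * jacobiSym (f ((e.symm (u, v)).val : ℤ)) b
        = jacobiSym (f (u.val : ℤ)) a * jacobiSym (f (v.val : ℤ)) b := by
    intro u v
    have key : ∀ z : ZMod (a * b), (e z).1 = (z.val : ZMod a) ∧ (e z).2 = (z.val : ZMod b) := by
      intro z
      have h1 : e z = ZMod.cast z := rfl
      have h2 : (ZMod.cast z : ZMod a × ZMod b) = ((z.val : ℕ) : ZMod a × ZMod b) :=
        (ZMod.natCast_val z).symm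
      rw [h1, h2]
      exact ⟨rfl, rfl⟩
    obtain ⟨h1, h2⟩ := key (e.symm (u, v))
    rw [Equiv.apply_symm_apply] at h1 h2
    congr 1
    · apply jacobiSym.mod_left'
      have : (((e.symm (u, v)).val : ℤ) : ZMod a) = ((u.val : ℤ) : ZMod a) := by
        push_cast
        rw [ZMod.natCast_val, ZMod.natCast_val, ZMod.cast_id, ← ZMod.natCast_val]
        exact h1.symm
      exact (ZMod.intCast_eq_intCast_iff' _ _ _).mp (hf a _ _ this)
    · apply jacobiSym.mod_left'
      have : (((e.symm (u, v)).val : ℤ) : ZMod b) = ((v.val : ℤ) : ZMod b) := by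
        push_cast
        rw [ZMod.natCast_val, ZMod.natCast_val, ZMod.cast_id, ← ZMod.natCast_val]
        exact h2.symm
      exact (ZMod.intCast_eq_intCast_iff' _ _ _).mp (hf b _ _ this)
  rw [Finset.sum_congr rfl fun u _ => Finset.sum_congr rfl fun v _ => hterm u v,
    ← Finset.sum_mul_sum]

private lemma hf1 (c d i : ℤ) : ∀ (m : ℕ) (x y : ℤ), (x : ZMod m) = (y : ZMod m) →
    (((x * (i ^ 2 + c * i * x + d * x ^ 2)) : ℤ) : ZMod m)
      = (((y * (i ^ 2 + c * i * y + d * y ^ 2)) : ℤ) : ZMod m) := by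
  intro m x y h
  push_cast
  rw [h]

private lemma hf2 (c d i : ℤ) : ∀ (m : ℕ) (x y : ℤ), (x : ZMod m) = (y : ZMod m) →
    (((-x * (i ^ 2 + 2 * c * i * x + (c ^ 2 - 4 * d) * x ^ 2)) : ℤ) : ZMod m)
      = (((-y * (i ^ 2 + 2 * c * i * y + (c ^ 2 - 4 * d) * y ^ 2)) : ℤ) : ZMod m) := by
  intro m x y h
  push_cast
  rw [h]

private lemma main_lemma (c d i : ℤ) : ∀ n : ℕ, 0 < n → Odd n → Squarefree n →
    ∑ j ∈ Finset.range n, jacobiSym ((j : ℤ) * (i ^ 2 + c * i * j + d * j ^ 2)) n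
      = ∑ j ∈ Finset.range n,
          jacobiSym ((-(j : ℤ)) * (i ^ 2 + 2 * c * i * j + (c ^ 2 - 4 * d) * j ^ 2)) n := by
  intro n
  induction n using Nat.strong_induction_on with
  | _ n ih =>
    intro hpos hodd hsf
    rcases eq_or_lt_of_le (Nat.succ_le_of_lt hpos) with h1 | h1
    · rw [← h1]
      simp
    · -- n > 1
      set p := n.minFac with hpdef
      have hp : p.Prime := Nat.minFac_prime (by omega)
      have hpd : p ∣ n := Nat.minFac_dvd n
      set m := n / p with hmdef
      have hnm : n = p * m := (Nat.mul_div_cancel' hpd).symm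
      have hm_pos : 0 < m := Nat.div_pos (Nat.minFac_le hpos) hp.pos
      have hmd : m ∣ n := ⟨p, by rw [hnm]; ring⟩
      have hodd' := hnm ▸ hodd
      obtain ⟨hp_odd, hm_odd⟩ := Nat.odd_mul.mp hodd'
      have hp2 : p ≠ 2 := by
        intro h
        rw [h] at hp_odd
        have := Nat.odd_iff.mp hp_odd
        norm_num at this
      have hcop : Nat.Coprime p m := by
        rw [Nat.Prime.coprime_iff_not_dvd hp]
        intro hdvd
        have : p * p ∣ n := by
          rw [hnm]
          exact mul_dvd_mul_left p hdvd
        exact hp.not_isUnit (hsf p this)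
      have hm_sf : Squarefree m := hsf.squarefree_of_dvd hmd
      have hm_lt : m < n := by
        rw [hnm]
        calc m = 1 * m := (one_mul m).symm
        _ < p * m := (Nat.mul_lt_mul_right hm_pos).mpr hp.one_lt
      haveI : NeZero p := ⟨hp.pos.ne'⟩
      haveI : NeZero m := ⟨hm_pos.ne'⟩
      haveI : Fact p.Prime := ⟨hp⟩
      rw [hnm, split_lemma p m hcop _ (hf1 c d i), split_lemma p m hcop _ (hf2 c d i),
        prime_case p hp2 c d i, ih m hm_lt hm_pos hm_odd hm_sf]

theorem stmt_8 (n : ℕ) (hpos : 0 < n) (hodd : Odd n) (hsf : Squarefree n)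
    (c d i : ℤ) :
    ∑ j ∈ Finset.range n, jacobiSym j n * jacobiSym (i ^ 2 + c * i * j + d * j ^ 2) n
      = ∑ j ∈ Finset.range n,
          jacobiSym (-j) n * jacobiSym (i ^ 2 + 2 * c * i * j + (c ^ 2 - 4 * d) * j ^ 2) n := by
  have h := main_lemma c d i n hpos hodd hsf
  calc ∑ j ∈ Finset.range n, jacobiSym j n * jacobiSym (i ^ 2 + c * i * j + d * j ^ 2) n
      = ∑ j ∈ Finset.range n, jacobiSym ((j : ℤ) * (i ^ 2 + c * i * j + d * j ^ 2)) n :=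
        Finset.sum_congr rfl fun j _ => (jacobiSym.mul_left _ _ n).symm
    _ = ∑ j ∈ Finset.range n,
          jacobiSym ((-(j : ℤ)) * (i ^ 2 + 2 * c * i * j + (c ^ 2 - 4 * d) * j ^ 2)) n := h
    _ = ∑ j ∈ Finset.range n,
          jacobiSym (-j) n * jacobiSym (i ^ 2 + 2 * c * i * j + (c ^ 2 - 4 * d) * j ^ 2) n :=
        Finset.sum_congr rfl fun j _ => jacobiSym.mul_left _ _ n
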